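/- Fix real parameters and suppose 0 < δ < 1. For infinitely many independent {0,1}-valued random variables, consider the partial sums K_{x,y} = ∑_{y'=x}^{y} (∏_{z=y'+1}^{y} (B'_z - B_z)) B_{y'} where B_z, B'_z are independent Bernoulli random variables with |B'_z - B_z| ≤ 1 and E[|B'_z - B_z|^p] ≤ 1 - δ for all z and any fixed p ≥ 1. Then the L^p norm of the term indexed by y' is bounded by (1-δ)^{(y-y')/p}; consequently as x → -∞ the sum K_{x,y} converges in L^p, and since each K_{x,y} ∈ {0,1}, it also converges almost surely to a {0,1}-valued random variable. -/

import Mathlib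

open MeasureTheory ProbabilityTheory Filter

lemma my_Icc_succ_left (a b : ℤ) : Finset.Icc (a+1) b = Finset.Ioc a b := by
  ext z; simp [Int.add_one_le_iff]

lemma my_Icc_insert (a b : ℤ) (h : a ≤ b) :
    Finset.Icc a b = insert a (Finset.Icc (a+1) b) := by
  rw [my_Icc_succ_left, Finset.Ioc_insert_left h]

lemma my_Icc_split (a c b : ℤ) (h1 : a ≤ c) (h2 : c ≤ b) :
    Finset.Icc a b = Finset.Ico a c ∪ Finset.Icc c b := by
  ext z; simp; omega

lemma my_Icc_split_disj (a c b : ℤ) :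
    Disjoint (Finset.Ico a c) (Finset.Icc c b) := by
  rw [Finset.disjoint_left]; intro z hz hz'; simp at hz hz'; omega

/-- Pointwise {0,1} lemma for the partial sums. -/
lemma my_S01 (b b' : ℤ → ℝ) (hb : ∀ z, b z = 0 ∨ b z = 1)
    (hb' : ∀ z, b' z = 0 ∨ b' z = 1) (y x : ℤ) (hxy : x ≤ y) :
    (∑ y' ∈ Finset.Icc x y, (∏ z ∈ Finset.Icc (y' + 1) y, (b' z - b z)) * b y') = 0 ∨
    (∑ y' ∈ Finset.Icc x y, (∏ z ∈ Finset.Icc (y' + 1) y, (b' z - b z)) * b y') = 1 := by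
  set P : ℤ → ℝ := fun x => ∏ z ∈ Finset.Icc (x + 1) y, (b' z - b z) with hP
  set S : ℤ → ℝ := fun x => ∑ y' ∈ Finset.Icc x y, (∏ z ∈ Finset.Icc (y' + 1) y, (b' z - b z)) * b y' with hS
  have hSempty : ∀ x, y < x → S x = 0 := by
    intro x hx; simp only [hS]; rw [Finset.Icc_eq_empty (by omega)]; simp
  have hPempty : ∀ x, y ≤ x → P x = 1 := by
    intro x hx; simp only [hP]; rw [Finset.Icc_eq_empty (by omega)]; simp
  have hSrec : ∀ x, x ≤ y → S x = P x * b x + S (x+1) := by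
    intro x hx
    simp only [hS, hP]
    rw [my_Icc_insert x y hx, Finset.sum_insert (by simp)]
  have hPrec : ∀ x, x + 1 ≤ y → P x = (b' (x+1) - b (x+1)) * P (x+1) := by
    intro x hx
    simp only [hP]
    rw [my_Icc_insert (x+1) y hx, Finset.prod_insert (by simp)]
  -- main induction
  have key : ∀ n : ℕ, (S (y - n) = 0 ∨ S (y - n) = 1) ∧
      (P (y - n) + S (y - n + 1) = 0 ∨ P (y - n) + S (y - n + 1) = 1) ∧
      (S (y - n + 1) = 0 ∨ S (y - n + 1) = 1) := by
    intro n
    induction n with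
    | zero =>
      have h0 : S (y + 1) = 0 := hSempty _ (by omega)
      have h1 : P y = 1 := hPempty _ le_rfl
      have h2 : S y = b y := by
        rw [hSrec y le_rfl, h1]
        rw [hSempty (y+1) (by omega)]; ring
      push_cast
      simp only [sub_zero]
      refine ⟨by rw [h2]; exact hb y, ?_, by rw [h0]; left; rfl⟩
      rw [h1, h0]; right; ring
    | succ n ih =>
      obtain ⟨ih1, ih2, ih3⟩ := ih
      set x : ℤ := y - (n+1 : ℕ) with hx
      have hxn : y - (n:ℕ) = x + 1 := by push_cast [hx]; ring
      rw [hxn] at ih1 ih2 ih3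
      have hxy' : x + 1 ≤ y := by push_cast [hx]; omega
      have hU : P x + S (x+1) = P (x+1) * b' (x+1) + S (x+2) := by
        rw [hPrec x hxy', hSrec (x+1) hxy']
        ring_nf
      have hSx2 : S (x + 2) = 0 ∨ S (x + 2) = 1 := by
        have : x + 1 + 1 = x + 2 := by ring
        rwa [this] at ih3
      have hU01 : P x + S (x+1) = 0 ∨ P x + S (x+1) = 1 := by
        rcases hb' (x+1) with h | h
        · rw [hU, h]
          simpa using hSx2
        · rw [hU, h, mul_one]
          have : x + 1 + 1 = x + 2 := by ring
          rwa [this] at ih2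
      have hSx01 : S x = 0 ∨ S x = 1 := by
        rw [hSrec x (by omega)]
        rcases hb x with h | h
        · rw [h, mul_zero, zero_add]; exact ih1
        · rw [h, mul_one]; exact hU01
      exact ⟨hSx01, hU01, ih1⟩
  have hn : y - ((y - x).toNat : ℤ) = x := by omega
  have := (key (y - x).toNat).1
  rwa [hn] at this

/-- product of values in {-1,0,1} is in {-1,0,1} -/
lemma my_prod_mem (c : ℤ → ℝ) (hc : ∀ z, c z = -1 ∨ c z = 0 ∨ c z = 1) (s : Finset ℤ) :
    (∏ z ∈ s, c z) = -1 ∨ (∏ z ∈ s, c z) = 0 ∨ (∏ z ∈ s, c z) = 1 := by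
  refine Finset.prod_induction c (fun r => r = -1 ∨ r = 0 ∨ r = 1) ?_ (by norm_num) (fun z _ => hc z)
  rintro a b (rfl | rfl | rfl) (rfl | rfl | rfl) <;> norm_num

/-- integral of product over independent family -/
lemma my_integral_prod {Ω : Type*} [MeasureSpace Ω] [IsProbabilityMeasure (ℙ : Measure Ω)]
    (F : ℤ → Ω → ℝ) (hmeas : ∀ i, Measurable (F i))
    (hindep : iIndepFun (m := fun _ : ℤ => (inferInstance : MeasurableSpace ℝ)) F ℙ)
    (hpos : ∀ i ω, 0 ≤ F i ω) (s : Finset ℤ) :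
    ∫ ω, ∏ z ∈ s, F z ω ∂ℙ = ∏ z ∈ s, ∫ ω, F z ω ∂ℙ := by
  classical
  induction s using Finset.induction_on with
  | empty => simp
  | @insert a s ha ih =>
    simp only [Finset.prod_insert ha]
    have hInd : IndepFun (F a) (∏ j ∈ s, F j) ℙ :=
      (hindep.indepFun_finset_prod_of_notMem hmeas ha).symm
    have hm2 : Measurable (∏ j ∈ s, F j) := by
      have h : (∏ j ∈ s, F j) = fun ω => ∏ j ∈ s, F j ω := by ext ω; simp
      rw [h]; exact Finset.measurable_prod s (fun i _ => hmeas i)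
    have hmul := hInd.integral_mul_eq_mul_integral
      (hmeas a).aestronglyMeasurable hm2.aestronglyMeasurable
    calc ∫ ω, F a ω * ∏ z ∈ s, F z ω ∂ℙ
        = ∫ ω, (F a * ∏ j ∈ s, F j) ω ∂ℙ := by
          congr 1; ext ω; simp
      _ = (∫ ω, F a ω ∂ℙ) * ∫ ω, (∏ j ∈ s, F j) ω ∂ℙ := hmul
      _ = (∫ ω, F a ω ∂ℙ) * ∫ ω, ∏ j ∈ s, F j ω ∂ℙ := by
          congr 1; apply integral_congr_ae; filter_upwards with ω; simp
      _ = (∫ ω, F a ω ∂ℙ) * ∏ x ∈ s, ∫ ω, F x ω ∂ℙ := by rw [ih]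


/-- **Convergence of the flux series defining the bi-infinite SHS6V model**
(Lemma 2.5 of the paper).  Let `(B_z, B'_z)_{z ∈ ℤ}` be an independent family of pairs of
`{0,1}`-valued random variables with `E[|B'_z - B_z|^p] ≤ 1 - δ` for all `z`, where
`p ≥ 1` and `0 < δ < 1`.  For `y ∈ ℤ` and `x ≤ y` set
`K_{x,y} = ∑_{y'=x}^{y} (∏_{z=y'+1}^{y} (B'_z - B_z)) B_{y'}`.  Then the `L^p` norm of the
term indexed by `y' = x` is at most `(1-δ)^{(y-x)/p}`; each `K_{x,y}` takes values in
`{0,1}`; and as `x → -∞` the sums `K_{x,y}` converge in `L^p` and almost surely to a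
`{0,1}`-valued random variable. -/
theorem flux_series_converges {Ω : Type*} [MeasureSpace Ω]
    [IsProbabilityMeasure (ℙ : Measure Ω)]
    (p δ : ℝ) (hp : 1 ≤ p) (hδ0 : 0 < δ) (hδ1 : δ < 1)
    (B B' : ℤ → Ω → ℝ)
    (hBmeas : ∀ z, Measurable (B z)) (hB'meas : ∀ z, Measurable (B' z))
    (hindep : iIndepFun (m := fun _ : ℤ => (inferInstance : MeasurableSpace (ℝ × ℝ)))
      (fun z ω => (B z ω, B' z ω)) ℙ)
    (hB01 : ∀ z ω, B z ω = 0 ∨ B z ω = 1)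
    (hB'01 : ∀ z ω, B' z ω = 0 ∨ B' z ω = 1)
    (hmoment : ∀ z, ∫ ω, |B' z ω - B z ω| ^ p ∂ℙ ≤ 1 - δ)
    (y : ℤ) :
    (∀ x : ℤ, x ≤ y →
        (∫ ω, |(∏ z ∈ Finset.Icc (x + 1) y, (B' z ω - B z ω)) * B x ω| ^ p ∂ℙ) ^ (1 / p)
          ≤ (1 - δ) ^ (((y - x : ℤ) : ℝ) / p)) ∧
      (∀ x : ℤ, x ≤ y → ∀ ω,
        (∑ y' ∈ Finset.Icc x y, (∏ z ∈ Finset.Icc (y' + 1) y, (B' z ω - B z ω)) * B y' ω) = 0 ∨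
        (∑ y' ∈ Finset.Icc x y, (∏ z ∈ Finset.Icc (y' + 1) y, (B' z ω - B z ω)) * B y' ω) = 1) ∧
      ∃ K : Ω → ℝ, (∀ᵐ ω ∂ℙ, K ω = 0 ∨ K ω = 1) ∧
        Tendsto (fun x : ℤ => ∫ ω,
            |(∑ y' ∈ Finset.Icc x y, (∏ z ∈ Finset.Icc (y' + 1) y, (B' z ω - B z ω)) * B y' ω)
              - K ω| ^ p ∂ℙ)
          atBot (nhds 0) ∧
        ∀ᵐ ω ∂ℙ, Tendsto (fun x : ℤ =>
            ∑ y' ∈ Finset.Icc x y, (∏ z ∈ Finset.Icc (y' + 1) y, (B' z ω - B z ω)) * B y' ω)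
          atBot (nhds (K ω)) := by
  classical
  have hp0 : (0:ℝ) < p := by linarith
  have hδ' : (0:ℝ) ≤ 1 - δ := by linarith
  set T : ℤ → Ω → ℝ := fun x ω => (∏ z ∈ Finset.Icc (x + 1) y, (B' z ω - B z ω)) * B x ω
    with hTdef
  set S : ℤ → Ω → ℝ :=
    fun x ω => ∑ y' ∈ Finset.Icc x y, (∏ z ∈ Finset.Icc (y' + 1) y, (B' z ω - B z ω)) * B y' ω
    with hSdef
  have hTmeas : ∀ x : ℤ, Measurable (T x) := fun x =>
    (Finset.measurable_prod _ (fun z _ => (hB'meas z).sub (hBmeas z))).mul (hBmeas x)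
  have hSmeas : ∀ x : ℤ, Measurable (S x) := fun x =>
    Finset.measurable_sum _ (fun y' _ => hTmeas y')
  -- pointwise values of |T|
  have hfac : ∀ (z : ℤ) (ω : Ω),
      B' z ω - B z ω = -1 ∨ B' z ω - B z ω = 0 ∨ B' z ω - B z ω = 1 := by
    intro z ω
    rcases hB01 z ω with h | h <;> rcases hB'01 z ω with h' | h' <;> rw [h, h'] <;> norm_num
  have hT01 : ∀ (x : ℤ) (ω : Ω), |T x ω| = 0 ∨ |T x ω| = 1 := by
    intro x ω
    have hprod := my_prod_mem (fun z => B' z ω - B z ω) (fun z => hfac z ω)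
      (Finset.Icc (x + 1) y)
    simp only [hTdef]
    rcases hB01 x ω with h | h
    · rw [h, mul_zero, abs_zero]; left; rfl
    · rw [h, mul_one]
      rcases hprod with h' | h' | h' <;> rw [h'] <;> norm_num
  have habsdiff01 : ∀ (z : ℤ) (ω : Ω), |B' z ω - B z ω| = 0 ∨ |B' z ω - B z ω| = 1 := by
    intro z ω
    rcases hfac z ω with h | h | h <;> rw [h] <;> norm_num
  have hrpow_self : ∀ r : ℝ, (r = 0 ∨ r = 1) → r ^ p = r := by
    rintro r (rfl | rfl)
    · exact Real.zero_rpow (ne_of_gt hp0)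
    · exact Real.one_rpow p
  have hS01 : ∀ x : ℤ, x ≤ y → ∀ ω, S x ω = 0 ∨ S x ω = 1 := by
    intro x hx ω
    exact my_S01 (fun z => B z ω) (fun z => B' z ω) (fun z => hB01 z ω) (fun z => hB'01 z ω)
      y x hx
  -- expectation of |B' - B|
  have hEdiff : ∀ z : ℤ, (0 ≤ ∫ ω, |B' z ω - B z ω| ∂ℙ) ∧ (∫ ω, |B' z ω - B z ω| ∂ℙ ≤ 1 - δ) := by
    intro z
    refine ⟨integral_nonneg fun ω => abs_nonneg _, ?_⟩
    have : ∫ ω, |B' z ω - B z ω| ∂ℙ = ∫ ω, |B' z ω - B z ω| ^ p ∂ℙ :=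
      integral_congr_ae (Filter.Eventually.of_forall fun ω =>
        (hrpow_self _ (habsdiff01 z ω)).symm)
    rw [this]; exact hmoment z
  -- the key moment bound
  have hkey : ∀ x : ℤ, x ≤ y → ∫ ω, |T x ω| ∂ℙ ≤ (1 - δ) ^ ((y - x).toNat) := by
    intro x hxy
    set G : ℤ → Ω → ℝ := fun z => if z = x then B x else fun ω => |B' z ω - B z ω| with hGdef
    have hGmeas : ∀ z, Measurable (G z) := by
      intro z
      by_cases h : z = x
      · simp only [hGdef, h, if_pos rfl]; exact hBmeas x
      · simp only [hGdef, if_neg h]; exact ((hB'meas z).sub (hBmeas z)).abs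
    have hGindep : iIndepFun (m := fun _ : ℤ => (inferInstance : MeasurableSpace ℝ)) G ℙ := by
      have h2 : G = fun z => (fun q : ℝ × ℝ => if z = x then q.1 else |q.2 - q.1|) ∘
          (fun ω => (B z ω, B' z ω)) := by
        funext z ω
        by_cases h : z = x <;> simp [hGdef, h]
      rw [h2]
      exact hindep.comp _ (fun z => by
        by_cases h : z = x
        · simp only [if_pos h]; exact measurable_fst
        · simp only [if_neg h]; exact (measurable_snd.sub measurable_fst).abs)
    have hGpos : ∀ z ω, 0 ≤ G z ω := by
      intro z ω
      by_cases h : z = x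
      · simp only [hGdef, h, if_pos rfl]
        rcases hB01 x ω with h' | h' <;> rw [h'] <;> norm_num
      · simp only [hGdef, if_neg h]; exact abs_nonneg _
    have hprodint := my_integral_prod G hGmeas hGindep hGpos (Finset.Icc x y)
    have hGx : G x = B x := by simp [hGdef]
    have hGne : ∀ z ∈ Finset.Icc (x + 1) y, G z = fun ω => |B' z ω - B z ω| := by
      intro z hz
      rw [Finset.mem_Icc] at hz
      simp [hGdef, show z ≠ x by omega]
    -- LHS identification
    have hLHS : ∀ ω, ∏ z ∈ Finset.Icc x y, G z ω = |T x ω| := by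
      intro ω
      rw [my_Icc_insert x y hxy, Finset.prod_insert (by simp)]
      have h1 : ∏ z ∈ Finset.Icc (x + 1) y, G z ω
          = ∏ z ∈ Finset.Icc (x + 1) y, |B' z ω - B z ω| :=
        Finset.prod_congr rfl fun z hz => by rw [hGne z hz]
      have h2 : |T x ω| = B x ω * ∏ z ∈ Finset.Icc (x + 1) y, |B' z ω - B z ω| := by
        simp only [hTdef]
        rw [abs_mul, Finset.abs_prod,
          abs_of_nonneg (by rcases hB01 x ω with h | h <;> rw [h] <;> norm_num : 0 ≤ B x ω)]
        ring
      rw [h1, h2, hGx]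
    have hint1 : ∫ ω, |T x ω| ∂ℙ = ∫ ω, ∏ z ∈ Finset.Icc x y, G z ω ∂ℙ :=
      integral_congr_ae (Filter.Eventually.of_forall fun ω => (hLHS ω).symm)
    -- RHS bound
    have hBint : Integrable (B x) ℙ :=
      (integrable_const (1:ℝ)).mono' (hBmeas x).aestronglyMeasurable
        (Filter.Eventually.of_forall fun ω => by
          rcases hB01 x ω with h | h <;> rw [h] <;> simp)
    have hEB0 : 0 ≤ ∫ ω, B x ω ∂ℙ := integral_nonneg fun ω => by
      rcases hB01 x ω with h | h <;> rw [h] <;> norm_num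
    have hEB1 : ∫ ω, B x ω ∂ℙ ≤ 1 := by
      calc ∫ ω, B x ω ∂ℙ ≤ ∫ _, (1:ℝ) ∂ℙ := by
            apply integral_mono hBint (integrable_const 1)
            intro ω; rcases hB01 x ω with h | h <;> rw [h] <;> norm_num
        _ = 1 := by simp
    have hRHS : ∏ z ∈ Finset.Icc x y, ∫ ω, G z ω ∂ℙ ≤ (1 - δ) ^ ((y - x).toNat) := by
      rw [my_Icc_insert x y hxy, Finset.prod_insert (by simp), hGx]
      have hcongr : ∏ z ∈ Finset.Icc (x + 1) y, ∫ ω, G z ω ∂ℙ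
          = ∏ z ∈ Finset.Icc (x + 1) y, ∫ ω, |B' z ω - B z ω| ∂ℙ :=
        Finset.prod_congr rfl fun z hz => by rw [hGne z hz]
      rw [hcongr]
      have hb : ∏ z ∈ Finset.Icc (x + 1) y, ∫ ω, |B' z ω - B z ω| ∂ℙ
          ≤ ∏ _z ∈ Finset.Icc (x + 1) y, (1 - δ) :=
        Finset.prod_le_prod (fun z _ => (hEdiff z).1) (fun z _ => (hEdiff z).2)
      have hbn : ∏ _z ∈ Finset.Icc (x + 1) y, (1 - δ) = (1 - δ) ^ ((y - x).toNat) := by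
        rw [Finset.prod_const, Int.card_Icc]
        congr 1; omega
      have hprodnn : 0 ≤ ∏ z ∈ Finset.Icc (x + 1) y, ∫ ω, |B' z ω - B z ω| ∂ℙ :=
        Finset.prod_nonneg fun z _ => (hEdiff z).1
      calc (∫ ω, B x ω ∂ℙ) * ∏ z ∈ Finset.Icc (x + 1) y, ∫ ω, |B' z ω - B z ω| ∂ℙ
          ≤ 1 * ∏ _z ∈ Finset.Icc (x + 1) y, (1 - δ) :=
            mul_le_mul hEB1 hb hprodnn zero_le_one
        _ = (1 - δ) ^ ((y - x).toNat) := by rw [one_mul, hbn]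
    rw [hint1, hprodint]; exact hRHS
  -- integrals of |T|^p and |T| agree
  have hintTp : ∀ x : ℤ, ∫ ω, |T x ω| ^ p ∂ℙ = ∫ ω, |T x ω| ∂ℙ := fun x =>
    integral_congr_ae (Filter.Eventually.of_forall fun ω => hrpow_self _ (hT01 x ω))
  -- Part 1
  have part1 : ∀ x : ℤ, x ≤ y →
      (∫ ω, |(∏ z ∈ Finset.Icc (x + 1) y, (B' z ω - B z ω)) * B x ω| ^ p ∂ℙ) ^ (1 / p)
        ≤ (1 - δ) ^ (((y - x : ℤ) : ℝ) / p) := by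
    intro x hxy
    have h1 : (∫ ω, |(∏ z ∈ Finset.Icc (x + 1) y, (B' z ω - B z ω)) * B x ω| ^ p ∂ℙ)
        = ∫ ω, |T x ω| ∂ℙ := hintTp x
    rw [h1]
    have h0 : 0 ≤ ∫ ω, |T x ω| ∂ℙ := integral_nonneg fun ω => abs_nonneg _
    calc (∫ ω, |T x ω| ∂ℙ) ^ (1 / p)
        ≤ ((1 - δ) ^ ((y - x).toNat)) ^ (1 / p) := by
          apply Real.rpow_le_rpow h0 (hkey x hxy) (by positivity)
      _ = (1 - δ) ^ (((y - x : ℤ) : ℝ) / p) := by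
          rw [← Real.rpow_natCast (1 - δ) ((y - x).toNat), ← Real.rpow_mul hδ']
          congr 1
          have hc : (((y - x).toNat : ℕ) : ℝ) = ((y - x : ℤ) : ℝ) := by
            have := Int.toNat_of_nonneg (by omega : (0:ℤ) ≤ y - x)
            exact_mod_cast congrArg (fun t : ℤ => (t : ℝ)) this
          rw [hc, mul_one_div]
  -- Part 2
  have part2 : ∀ x : ℤ, x ≤ y → ∀ ω, S x ω = 0 ∨ S x ω = 1 := hS01
  refine ⟨part1, part2, ?_⟩
  -- Borel–Cantelli
  set sets : ℕ → Set Ω := fun n => {ω | T (y - (n : ℤ)) ω ≠ 0} with hsets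
  have hsm : ∀ n, MeasurableSet (sets n) :=
    fun n => (measurableSet_eq_fun (hTmeas (y - (n:ℤ))) measurable_const).compl
  have hμs : ∀ n, ℙ (sets n) ≤ ENNReal.ofReal ((1 - δ) ^ n) := by
    intro n
    have hindic : ∀ ω, |T (y - (n:ℤ)) ω| = (sets n).indicator 1 ω := by
      intro ω
      by_cases h : T (y - (n:ℤ)) ω = 0
      · simp [hsets, Set.indicator, h]
      · rcases hT01 (y - (n:ℤ)) ω with h0 | h1
        · exact absurd (abs_eq_zero.mp h0) h
        · have hmem : ω ∈ sets n := h
          rw [h1, Set.indicator_of_mem hmem]; rfl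
    have hth : ∫ ω, |T (y - (n:ℤ)) ω| ∂ℙ = (ℙ (sets n)).toReal := by
      rw [integral_congr_ae (Filter.Eventually.of_forall hindic)]
      exact MeasureTheory.integral_indicator_one (hsm n)
    have hb := hkey (y - (n:ℤ)) (by omega)
    rw [hth] at hb
    have hn : (y - (y - (n:ℤ))).toNat = n := by omega
    rw [hn] at hb
    rw [← ENNReal.ofReal_toReal (measure_ne_top ℙ (sets n))]
    exact ENNReal.ofReal_le_ofReal hb
  have hsum : ∑' n, ℙ (sets n) ≠ ⊤ := by
    apply ne_top_of_le_ne_top _ (ENNReal.tsum_le_tsum hμs)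
    have heq : ∀ n : ℕ, ENNReal.ofReal ((1 - δ) ^ n) = (ENNReal.ofReal (1 - δ)) ^ n := by
      intro n; rw [← ENNReal.ofReal_pow hδ']
    rw [tsum_congr heq, ENNReal.tsum_geometric]
    rw [Ne, ENNReal.inv_eq_top, tsub_eq_zero_iff_le]
    exact not_le_of_gt (ENNReal.ofReal_lt_one.mpr (by linarith))
  have hae := MeasureTheory.ae_eventually_notMem hsum
  -- the limit K
  set K : Ω → ℝ := fun ω =>
    if h : ∃ c, Tendsto (fun x : ℤ => S x ω) atBot (nhds c) then h.choose else 0 with hKdef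
  have hconv : ∀ᵐ ω ∂ℙ, (K ω = 0 ∨ K ω = 1) ∧
      (∀ᶠ x in (atBot : Filter ℤ), S x ω = K ω) ∧
      Tendsto (fun x : ℤ => S x ω) atBot (nhds (K ω)) := by
    filter_upwards [hae] with ω hω
    obtain ⟨N, hN⟩ := eventually_atTop.mp hω
    have hT0 : ∀ y' : ℤ, y' ≤ y - (N:ℤ) → T y' ω = 0 := by
      intro y' hy'
      have h1 := hN ((y - y').toNat) (by omega)
      simp only [hsets, Set.mem_setOf_eq, not_not] at h1
      rwa [show y - (((y - y').toNat : ℕ) : ℤ) = y' by omega] at h1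
    have hSeq : ∀ x : ℤ, x ≤ y - (N:ℤ) → S x ω = S (y - (N:ℤ)) ω := by
      intro x hx
      have hsplit : Finset.Icc x y = Finset.Ico x (y - (N:ℤ)) ∪ Finset.Icc (y - (N:ℤ)) y :=
        my_Icc_split _ _ _ hx (by omega)
      have : S x ω = (∑ y' ∈ Finset.Ico x (y - (N:ℤ)), T y' ω) + S (y - (N:ℤ)) ω := by
        simp only [hSdef]
        rw [hsplit, Finset.sum_union (my_Icc_split_disj _ _ _)]
      rw [this, Finset.sum_eq_zero (fun y' hy' => hT0 y'
        (by rw [Finset.mem_Ico] at hy'; omega)), zero_add]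
    have hconst : Tendsto (fun x : ℤ => S x ω) atBot (nhds (S (y - (N:ℤ)) ω)) := by
      apply Tendsto.congr' ?_ tendsto_const_nhds
      filter_upwards [eventually_le_atBot (y - (N:ℤ))] with x hx using (hSeq x hx).symm
    have hex : ∃ c, Tendsto (fun x : ℤ => S x ω) atBot (nhds c) := ⟨_, hconst⟩
    have hK : K ω = S (y - (N:ℤ)) ω := by
      rw [hKdef]
      simp only [dif_pos hex]
      exact tendsto_nhds_unique hex.choose_spec hconst
    refine ⟨?_, ?_, ?_⟩
    · rw [hK]; exact hS01 _ (by omega) ω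
    · filter_upwards [eventually_le_atBot (y - (N:ℤ))] with x hx
      rw [hSeq x hx, hK]
    · rw [hK]; exact hconst
  have hK01 : ∀ᵐ ω ∂ℙ, K ω = 0 ∨ K ω = 1 := hconv.mono fun ω h => h.1
  have hKtend : ∀ᵐ ω ∂ℙ, Tendsto (fun x : ℤ => S x ω) atBot (nhds (K ω)) :=
    hconv.mono fun ω h => h.2.2
  have hKae : AEMeasurable K ℙ :=
    aemeasurable_of_tendsto_metrizable_ae atBot (fun x => (hSmeas x).aemeasurable) hKtend
  -- L^p convergence via dominated convergence
  have hLp : Tendsto (fun x : ℤ => ∫ ω, |S x ω - K ω| ^ p ∂ℙ) atBot (nhds 0) := by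
    have hcont : Continuous fun t : ℝ => |t| ^ p := by
      have h1 : Continuous fun u : ℝ => u ^ p := continuous_iff_continuousAt.mpr
        fun t => Real.continuousAt_rpow_const t p (Or.inr (le_of_lt hp0))
      exact h1.comp continuous_abs
    have hFmeas : ∀ x : ℤ, AEStronglyMeasurable (fun ω => |S x ω - K ω| ^ p) ℙ := by
      intro x
      exact (hcont.measurable.comp_aemeasurable ((hSmeas x).aemeasurable.sub hKae)).aestronglyMeasurable
    have hSbound : ∀ (x : ℤ) (ω : Ω), |S x ω| ≤ 1 := by
      intro x ω
      by_cases hx : x ≤ y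
      · rcases hS01 x hx ω with h | h <;> rw [h] <;> norm_num
      · have : S x ω = 0 := by
          simp only [hSdef]
          rw [Finset.Icc_eq_empty (by omega)]; simp
        rw [this]; norm_num
    have hb : ∀ x : ℤ, ∀ᵐ ω ∂ℙ, ‖|S x ω - K ω| ^ p‖ ≤ (2:ℝ) ^ p := by
      intro x
      filter_upwards [hK01] with ω hω
      have hKb : |K ω| ≤ 1 := by rcases hω with h | h <;> rw [h] <;> norm_num
      have habs : |S x ω - K ω| ≤ 2 := by
        calc |S x ω - K ω| ≤ |S x ω| + |K ω| := abs_sub _ _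
          _ ≤ 1 + 1 := add_le_add (hSbound x ω) hKb
          _ = 2 := by norm_num
      rw [Real.norm_eq_abs, abs_of_nonneg (Real.rpow_nonneg (abs_nonneg _) p)]
      exact Real.rpow_le_rpow (abs_nonneg _) habs (le_of_lt hp0)
    have hlim : ∀ᵐ ω ∂ℙ, Tendsto (fun x : ℤ => |S x ω - K ω| ^ p) atBot (nhds 0) := by
      filter_upwards [hconv] with ω hω
      apply Tendsto.congr' ?_ tendsto_const_nhds
      filter_upwards [hω.2.1] with x hx
      rw [hx, sub_self, abs_zero, Real.zero_rpow (ne_of_gt hp0)]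
    have := MeasureTheory.tendsto_integral_filter_of_dominated_convergence
      (μ := ℙ) (F := fun x : ℤ => fun ω => |S x ω - K ω| ^ p) (f := fun _ => (0:ℝ))
      (bound := fun _ => (2:ℝ) ^ p)
      (Filter.Eventually.of_forall hFmeas)
      (Filter.Eventually.of_forall hb)
      (integrable_const _)
      hlim
    simpa using this
  exact ⟨K, hK01, hLp, hKtend⟩
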